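/- arXiv:2403.10564 — 4 statements merged into one kernel-verified Lean document; each statement's English description precedes it below -/
import Mathlib

section
/- If in a multipartite quantum scenario the measurements of one party are jointly measurable, then the resulting behaviour is Bell local: for any N-partite state ρ and any sets of POVMs {M^n_{a_n|x_n}} for the other parties, if {M^1_{a|x}} = {Σ_λ p(a|x,λ) G_λ} is jointly measurable, the behaviour p(a_1…a_N|x_1…x_N) = Tr[ρ (M^1_{a_1|x_1} ⊗ … ⊗ M^N_{a_N|x_N})] is Bell local in the bipartition separating party 1 from the rest. -/
open Matrix BigOperators Kronecker ComplexOrder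

noncomputable section

abbrev Op (d : ℕ) := Matrix (Fin d) (Fin d) ℂ

def IsCondProb {nx na : ℕ} (p : Fin nx → Fin na → ℝ) : Prop :=
  (∀ x a, 0 ≤ p x a) ∧ ∀ x, ∑ a, p x a = 1

def IsPOVM {d m : ℕ} (G : Fin m → Op d) : Prop :=
  (∀ l, (G l).PosSemidef) ∧ ∑ l, G l = 1

def IsPOVMSet {d nx na : ℕ} (M : Fin nx → Fin na → Op d) : Prop :=
  ∀ x, IsPOVM (M x)

def IsDensity {n : Type*} [Fintype n] (ρ : Matrix n n ℂ) : Prop :=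
  ρ.PosSemidef ∧ ρ.trace = 1

def JointlyMeasurable {d nx na : ℕ} (M : Fin nx → Fin na → Op d) : Prop :=
  ∃ (m : ℕ) (G : Fin m → Op d) (p : Fin m → Fin nx → Fin na → ℝ),
    IsPOVM G ∧ (∀ l, IsCondProb (p l)) ∧
    ∀ x a, M x a = ∑ l, p l x a • G l

def SeparableMap {d nx na : ℕ} (M : Fin nx → Fin na → Op d) : Prop :=
  ∃ (m : ℕ) (G : Fin m → Op d) (p : Fin m → Fin nx → Fin na → ℝ),
    (∀ l, (G l).PosSemidef) ∧ (∀ l, IsCondProb (p l)) ∧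
    ∀ x a, M x a = ∑ l, p l x a • G l

def tensorOp {d N : ℕ} (A : Fin N → Op d) : Matrix (Fin N → Fin d) (Fin N → Fin d) ℂ :=
  Matrix.of fun i j => ∏ n, A n (i n) (j n)

def BehaviourOf {d N nx na : ℕ} (M : Fin nx → Fin na → Op d)
    (ρ : Matrix (Fin N → Fin d) (Fin N → Fin d) ℂ) :
    (Fin N → Fin nx) → (Fin N → Fin na) → ℂ :=
  fun x a => (ρ * tensorOp (fun n => M (x n) (a n))).trace

def BellLocalC {N nx na : ℕ} (p : (Fin N → Fin nx) → (Fin N → Fin na) → ℂ) : Prop :=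
  ∃ (m : ℕ) (q : Fin m → ℝ) (c : Fin m → Fin N → Fin nx → Fin na → ℝ),
    (∀ l, 0 ≤ q l) ∧ (∑ l, q l = 1) ∧ (∀ l n, IsCondProb (c l n)) ∧
    ∀ x a, p x a = ((∑ l, q l * ∏ n, c l n (x n) (a n) : ℝ) : ℂ)

def BellLocalR {N nx na : ℕ} (p : (Fin N → Fin nx) → (Fin N → Fin na) → ℝ) : Prop :=
  ∃ (m : ℕ) (q : Fin m → ℝ) (c : Fin m → Fin N → Fin nx → Fin na → ℝ),
    (∀ l, 0 ≤ q l) ∧ (∑ l, q l = 1) ∧ (∀ l n, IsCondProb (c l n)) ∧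
    ∀ x a, p x a = ∑ l, q l * ∏ n, c l n (x n) (a n)

def SeparableState {d N : ℕ} (ρ : Matrix (Fin N → Fin d) (Fin N → Fin d) ℂ) : Prop :=
  ∃ (m : ℕ) (q : Fin m → ℝ) (σ : Fin m → Fin N → Op d),
    (∀ l, 0 ≤ q l) ∧ (∀ l n, IsDensity (σ l n)) ∧
    ρ = ∑ l, q l • tensorOp (σ l)

def SepBipartite {d e : ℕ} (ρ : Matrix (Fin d × Fin e) (Fin d × Fin e) ℂ) : Prop :=
  ∃ (m : ℕ) (q : Fin m → ℝ) (σ : Fin m → Op d) (τ : Fin m → Matrix (Fin e) (Fin e) ℂ),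
    (∀ l, 0 ≤ q l) ∧ (∀ l, (σ l).PosSemidef) ∧ (∀ l, (τ l).PosSemidef) ∧
    ρ = ∑ l, q l • (σ l ⊗ₖ τ l)

def tensorPowMap {d N : ℕ} (Φ : Op d →ₗ[ℂ] Op d)
    (ρ : Matrix (Fin N → Fin d) (Fin N → Fin d) ℂ) :
    Matrix (Fin N → Fin d) (Fin N → Fin d) ℂ :=
  ∑ i, ∑ j, ρ i j • tensorOp (fun n => Φ (Matrix.single (i n) (j n) 1))

def tensorId {d e : ℕ} (Φ : Op d →ₗ[ℂ] Op d)
    (ρ : Matrix (Fin d × Fin e) (Fin d × Fin e) ℂ) :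
    Matrix (Fin d × Fin e) (Fin d × Fin e) ℂ :=
  Matrix.of fun p q => Φ (Matrix.of fun i j => ρ (i, p.2) (j, q.2)) p.1 q.1

def IsPositiveMap {d : ℕ} (Φ : Op d →ₗ[ℂ] Op d) : Prop :=
  ∀ ρ : Op d, ρ.PosSemidef → (Φ ρ).PosSemidef

def maxEnt (d : ℕ) : Matrix (Fin d × Fin d) (Fin d × Fin d) ℂ :=
  Matrix.of fun p q => if p.1 = p.2 ∧ q.1 = q.2 then (1 / d : ℂ) else 0

def choi {d : ℕ} (Φ : Op d →ₗ[ℂ] Op d) : Matrix (Fin d × Fin d) (Fin d × Fin d) ℂ :=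
  Matrix.of fun p q => (1 / d : ℂ) * Φ (Matrix.single p.2 q.2 1) p.1 q.1

def IsCompletelyPositive {d : ℕ} (Φ : Op d →ₗ[ℂ] Op d) : Prop :=
  (choi Φ).PosSemidef

def EntanglementBreaking {d : ℕ} (Φ : Op d →ₗ[ℂ] Op d) : Prop :=
  ∀ (e : ℕ) (ρ : Matrix (Fin d × Fin e) (Fin d × Fin e) ℂ),
    IsDensity ρ → SepBipartite (tensorId Φ ρ)

def LEA {d : ℕ} (Φ : Op d →ₗ[ℂ] Op d) : Prop :=
  ∀ (N : ℕ) (ρ : Matrix (Fin N → Fin d) (Fin N → Fin d) ℂ),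
    IsDensity ρ → SeparableState (tensorPowMap Φ ρ)

def noisy (d : ℕ) (η : ℝ) (A : Op d) : Op d :=
  η • A + (((1 - η : ℝ) : ℂ) * A.trace / d) • (1 : Op d)

section Aux

lemma tensorOp_conjT {d N : ℕ} (A : Fin N → Op d) :
    (tensorOp A)ᴴ = tensorOp fun n => (A n)ᴴ := by
  ext i j
  simp [tensorOp, Matrix.conjTranspose_apply, star_prod]

lemma tensorOp_mul {d N : ℕ} (A B : Fin N → Op d) :
    tensorOp A * tensorOp B = tensorOp (fun n => A n * B n) := by
  ext i j
  simp only [tensorOp, Matrix.mul_apply, Matrix.of_apply]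
  rw [Finset.prod_univ_sum, Fintype.piFinset_univ]
  exact Finset.sum_congr rfl fun k _ => (Finset.prod_mul_distrib).symm

lemma tensorOp_psd {d N : ℕ} {A : Fin N → Op d} (h : ∀ n, (A n).PosSemidef) :
    (tensorOp A).PosSemidef := by
  choose B hB using fun n => (by open scoped MatrixOrder in exact CStarAlgebra.nonneg_iff_eq_star_mul_self.mp (h n).nonneg : ∃ B : Op d, A n = Bᴴ * B)
  have hAB : tensorOp A = (tensorOp B)ᴴ * tensorOp B := by
    rw [tensorOp_conjT, tensorOp_mul]
    exact congrArg tensorOp (funext hB)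
  rw [hAB]
  exact Matrix.posSemidef_conjTranspose_mul_self _

lemma trace_psd_nonneg {n : Type*} [Fintype n] [DecidableEq n] {X : Matrix n n ℂ}
    (hX : X.PosSemidef) : 0 ≤ X.trace := by
  rw [Matrix.trace]
  apply Finset.sum_nonneg
  intro i _
  exact hX.diag_nonneg

lemma trace_mul_psd_nonneg {n : Type*} [Fintype n] [DecidableEq n] {ρ A : Matrix n n ℂ}
    (hρ : ρ.PosSemidef) (hA : A.PosSemidef) : 0 ≤ (ρ * A).trace := by
  obtain ⟨B, rfl⟩ := (by open scoped MatrixOrder in exact CStarAlgebra.nonneg_iff_eq_star_mul_self.mp hA.nonneg : ∃ B : Matrix n n ℂ, A = Bᴴ * B)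
  rw [show ρ * (Bᴴ * B) = ρ * Bᴴ * B from (mul_assoc ρ Bᴴ B).symm,
    Matrix.trace_mul_cycle]
  exact trace_psd_nonneg (hρ.mul_mul_conjTranspose_same B)

lemma tensorOp_one {d N : ℕ} : tensorOp (fun _ : Fin N => (1 : Op d)) = 1 := by
  ext i j
  by_cases h : i = j
  · subst h
    simp [tensorOp, Matrix.one_apply]
  · have : ∃ n, i n ≠ j n := by
      by_contra hc; push_neg at hc; exact h (funext hc)
    obtain ⟨n, hn⟩ := this
    simp only [tensorOp, Matrix.of_apply, Matrix.one_apply, if_neg h]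
    exact Finset.prod_eq_zero (Finset.mem_univ n) (by simp [Matrix.one_apply, hn])

lemma complex_eq_re {z : ℂ} (hz : 0 ≤ z) : z = ((z.re : ℝ) : ℂ) := by
  rw [Complex.le_def] at hz
  exact Complex.ext (by simp) (by simp [← hz.2])

end Aux

/-- if the measurements of party `0` are jointly measurable, then for any
`(N+1)`-partite state and any POVM sets for the other parties, the behaviour is Bell local
in the bipartition separating party `0` from the rest. -/
theorem stmt_2 {d N nx na : ℕ} (M : Fin (N + 1) → Fin nx → Fin na → Op d)
    (hM : ∀ n, IsPOVMSet (M n)) (hJM : JointlyMeasurable (M 0))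
    (ρ : Matrix (Fin (N + 1) → Fin d) (Fin (N + 1) → Fin d) ℂ) (hρ : IsDensity ρ) :
    ∃ (m : ℕ) (q : Fin m → ℝ) (p1 : Fin m → Fin nx → Fin na → ℝ)
      (r : Fin m → (Fin N → Fin nx) → (Fin N → Fin na) → ℝ),
      (∀ l, 0 ≤ q l) ∧ (∑ l, q l = 1) ∧ (∀ l, IsCondProb (p1 l)) ∧
      (∀ l x a, 0 ≤ r l x a) ∧ (∀ l x, ∑ a, r l x a = 1) ∧
      ∀ (x : Fin (N + 1) → Fin nx) (a : Fin (N + 1) → Fin na),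
        (ρ * tensorOp (fun n => M n (x n) (a n))).trace
          = ((∑ l, q l * p1 l (x 0) (a 0)
              * r l (fun n => x n.succ) (fun n => a n.succ) : ℝ) : ℂ) := by
  classical
  obtain ⟨hρp, hρt⟩ := hρ
  obtain ⟨m, G, p, hGpovm, hp, hMdec⟩ := hJM
  -- the local dimension is positive
  have hd : Nonempty (Fin d) := by
    rcases isEmpty_or_nonempty (Fin d) with h | h
    · exfalso
      have hE : IsEmpty (Fin (N + 1) → Fin d) := ⟨fun f => h.false (f 0)⟩
      rw [Matrix.trace, Finset.univ_eq_empty, Finset.sum_empty] at hρt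
      exact zero_ne_one hρt
    · exact h
  -- there is at least one λ
  have hm : Nonempty (Fin m) := by
    rcases isEmpty_or_nonempty (Fin m) with h | h
    · exfalso
      have h1 := hGpovm.2
      rw [Finset.univ_eq_empty, Finset.sum_empty] at h1
      obtain ⟨i⟩ := hd
      have h2 : (0 : Op d) i i = (1 : Op d) i i := by rw [h1]
      simp [Matrix.one_apply] at h2
    · exact h
  obtain ⟨l0⟩ := hm
  -- abbreviations
  set Ten : Fin m → (Fin N → Fin nx) → (Fin N → Fin na) →
      Matrix (Fin (N + 1) → Fin d) (Fin (N + 1) → Fin d) ℂ :=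
    fun l y b => tensorOp (Fin.cons (G l) (fun n => M n.succ (y n) (b n))) with hTen
  set T : Fin m → (Fin N → Fin nx) → (Fin N → Fin na) → ℂ :=
    fun l y b => (ρ * Ten l y b).trace with hT
  set Q : Fin m → ℂ :=
    fun l => (ρ * tensorOp (Fin.cons (G l) (fun _ : Fin N => (1 : Op d)))).trace with hQ
  have hconsPSD : ∀ (X : Op d) (F : Fin N → Op d), X.PosSemidef →
      (∀ k, (F k).PosSemidef) →
      ∀ n, ((Fin.cons X F : Fin (N + 1) → Op d) n).PosSemidef := by
    intro X F hX hF n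
    refine Fin.cases ?_ ?_ n
    · simpa using hX
    · intro k; simpa using hF k
  have hTpos : ∀ l y b, 0 ≤ T l y b := by
    intro l y b
    exact trace_mul_psd_nonneg hρp (tensorOp_psd
      (hconsPSD _ _ (hGpovm.1 l) (fun k => (hM k.succ (y k)).1 (b k))))
  have hQpos : ∀ l, 0 ≤ Q l := by
    intro l
    exact trace_mul_psd_nonneg hρp (tensorOp_psd
      (hconsPSD _ _ (hGpovm.1 l) (fun _ => Matrix.PosSemidef.one)))
  -- decomposition of the full tensor operator
  have hdecA : ∀ (x : Fin (N + 1) → Fin nx) (a : Fin (N + 1) → Fin na),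
      tensorOp (fun n => M n (x n) (a n))
        = ∑ l, ((p l (x 0) (a 0) : ℝ) : ℂ) •
            Ten l (fun n => x n.succ) (fun n => a n.succ) := by
    intro x a
    ext i j
    simp only [hTen, tensorOp, Matrix.of_apply, Matrix.sum_apply, Matrix.smul_apply,
      smul_eq_mul]
    rw [Fin.prod_univ_succ, hMdec (x 0) (a 0), Matrix.sum_apply, Finset.sum_mul]
    refine Finset.sum_congr rfl fun l _ => ?_
    rw [Fin.prod_univ_succ]
    simp only [Fin.cons_zero, Fin.cons_succ, Matrix.smul_apply]
    push_cast
    ring_nf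
    simp [Complex.real_smul]
    ring
  -- marginalising party ≥ 1 outcomes
  have hdecB : ∀ l (y : Fin N → Fin nx),
      ∑ b : Fin N → Fin na, Ten l y b
        = tensorOp (Fin.cons (G l) (fun _ : Fin N => (1 : Op d))) := by
    intro l y
    ext i j
    simp only [hTen, Matrix.sum_apply, tensorOp, Matrix.of_apply]
    have hterm : ∀ b : Fin N → Fin na,
        (∏ n, (Fin.cons (G l) (fun k => M k.succ (y k) (b k)) : Fin (N + 1) → Op d) n
            (i n) (j n))
          = G l (i 0) (j 0) * ∏ k : Fin N, M k.succ (y k) (b k) (i k.succ) (j k.succ) := by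
      intro b; rw [Fin.prod_univ_succ]; simp
    rw [Finset.sum_congr rfl fun b _ => hterm b, ← Finset.mul_sum, Fin.prod_univ_succ]
    simp only [Fin.cons_zero, Fin.cons_succ]
    congr 1
    calc ∑ b : Fin N → Fin na, ∏ k : Fin N, M k.succ (y k) (b k) (i k.succ) (j k.succ)
        = ∏ k : Fin N, ∑ c : Fin na, M k.succ (y k) c (i k.succ) (j k.succ) := by
          rw [Finset.prod_univ_sum, Fintype.piFinset_univ]
      _ = ∏ k : Fin N, (1 : Op d) (i k.succ) (j k.succ) := by
          refine Finset.prod_congr rfl fun k _ => ?_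
          rw [← Matrix.sum_apply, (hM k.succ (y k)).2]
  -- summing over λ gives the identity
  have hdecC : ∑ l, tensorOp (Fin.cons (G l) (fun _ : Fin N => (1 : Op d)))
      = (1 : Matrix (Fin (N + 1) → Fin d) (Fin (N + 1) → Fin d) ℂ) := by
    rw [← tensorOp_one (d := d) (N := N + 1)]
    ext i j
    simp only [Matrix.sum_apply, tensorOp, Matrix.of_apply]
    have hterm : ∀ l,
        (∏ n, (Fin.cons (G l) (fun _ : Fin N => (1 : Op d)) : Fin (N + 1) → Op d) n
            (i n) (j n))
          = G l (i 0) (j 0) * ∏ k : Fin N, (1 : Op d) (i k.succ) (j k.succ) := by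
      intro l; rw [Fin.prod_univ_succ]; simp
    rw [Finset.sum_congr rfl fun l _ => hterm l, ← Finset.sum_mul, ← Matrix.sum_apply,
      hGpovm.2, Fin.prod_univ_succ]
  have hQT : ∀ l y, ∑ b, T l y b = Q l := by
    intro l y
    simp only [hT, hQ]
    rw [← Matrix.trace_sum, ← Finset.mul_sum, hdecB]
  have hQsum : ∑ l, Q l = 1 := by
    simp only [hQ]
    rw [← Matrix.trace_sum, ← Finset.mul_sum, hdecC, mul_one, hρt]
  have hQrepos : ∀ l, 0 ≤ (Q l).re := fun l => (Complex.le_def.mp (hQpos l)).1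
  have hTrepos : ∀ l y b, 0 ≤ (T l y b).re := fun l y b => (Complex.le_def.mp (hTpos l y b)).1
  refine ⟨m, fun l => (Q l).re, p,
    fun l y b => if (Q l).re = 0 then ∏ n, p l0 (y n) (b n)
      else (T l y b).re / (Q l).re, hQrepos, ?_, hp, ?_, ?_, ?_⟩
  · rw [← Complex.re_sum, hQsum, Complex.one_re]
  · intro l y b
    by_cases h : (Q l).re = 0
    · simp only [if_pos h]
      exact Finset.prod_nonneg fun n _ => (hp l0).1 _ _
    · simp only [if_neg h]
      exact div_nonneg (hTrepos l y b) (hQrepos l)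
  · intro l y
    by_cases h : (Q l).re = 0
    · simp only [if_pos h]
      rw [← Fintype.piFinset_univ, ← Finset.prod_univ_sum]
      exact Finset.prod_eq_one fun k _ => (hp l0).2 (y k)
    · simp only [if_neg h]
      rw [← Finset.sum_div, ← Complex.re_sum, hQT, div_self h]
  · intro x a
    set y : Fin N → Fin nx := fun n => x n.succ with hy
    set b : Fin N → Fin na := fun n => a n.succ with hb
    have key : (ρ * tensorOp (fun n => M n (x n) (a n))).trace
        = ∑ l, ((p l (x 0) (a 0) : ℝ) : ℂ) * T l y b := by
      rw [hdecA x a, Finset.mul_sum, Matrix.trace_sum]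
      refine Finset.sum_congr rfl fun l _ => ?_
      rw [Matrix.mul_smul, Matrix.trace_smul]
      simp [hT]
      exact Or.inl rfl
    have hqr : ∀ l, (Q l).re *
        (if (Q l).re = 0 then ∏ n, p l0 (y n) (b n) else (T l y b).re / (Q l).re)
          = (T l y b).re := by
      intro l
      by_cases h : (Q l).re = 0
      · simp only [if_pos h, h, zero_mul]
        have hsum : ∑ b' : Fin N → Fin na, (T l y b').re = 0 := by
          rw [← Complex.re_sum, hQT, h]
        exact ((Finset.sum_eq_zero_iff_of_nonneg
          (fun b' _ => hTrepos l y b')).mp hsum b (Finset.mem_univ b)).symm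
      · simp only [if_neg h]
        rw [mul_comm, div_mul_cancel₀ _ h]
    rw [key, Complex.ofReal_sum]
    refine Finset.sum_congr rfl fun l _ => ?_
    rw [complex_eq_re (hTpos l y b), ← hqr l]
    push_cast
    ring
end
end

section
/- Let M = {M_{a|x}} be a set of POVMs on ℂ^d such that for every N and every N-partite state ρ_N on (ℂ^d)^{⊗N}, the behaviour Tr[ρ_N (M_{a_1|x_1} ⊗ … ⊗ M_{a_N|x_N})] is Bell local. Then for any positive linear map R̃ : B(n_a,n_x) → density matrices on ℂ^d, the composition Ψ = R̃ ∘ M is locally entanglement annihilating: Ψ^{⊗N}(ρ_N) is a separable quantum state for every N and every state ρ_N. -/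
open Matrix BigOperators Kronecker ComplexOrder

noncomputable section

/-- if all multipartite behaviours generated by the POVMs `M` are Bell local,
then for any positive map `R` from conditional probabilities to density matrices, the
composition `Ψ = R ∘ M` is locally entanglement annihilating. -/
theorem stmt_9 {d nx na : ℕ} (M : Fin nx → Fin na → Op d) (hM : IsPOVMSet M)
    (hloc : ∀ (N : ℕ) (ρ : Matrix (Fin N → Fin d) (Fin N → Fin d) ℂ),
      IsDensity ρ → BellLocalC (BehaviourOf M ρ))
    (R : (Fin nx → Fin na → ℂ) →ₗ[ℂ] Op d)
    (hR : ∀ p : Fin nx → Fin na → ℝ, IsCondProb p →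
      IsDensity (R (fun x a => ((p x a : ℝ) : ℂ))))
    (Ψ : Op d →ₗ[ℂ] Op d)
    (hΨ : ∀ ρ : Op d, Ψ ρ = R (fun x a => (M x a * ρ).trace)) :
    LEA Ψ := by
  classical
  intro N ρ hρ
  obtain ⟨m, w, c, hw0, hw1, hc, hB⟩ := hloc N ρ hρ
  refine ⟨m, w, fun l n => R (fun x a => ((c l n x a : ℝ) : ℂ)), hw0,
    fun l n => hR _ (hc l n), ?_⟩
  ext u v
  set K : Fin nx → Fin na → Op d :=
    fun x a => R (fun x' a' => if x' = x ∧ a' = a then (1:ℂ) else 0) with hKdef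
  have htr : ∀ (A : Op d) (i j : Fin d),
      (A * Matrix.single i j (1:ℂ)).trace = A j i := by
    intro A i j
    simp [Matrix.trace, Matrix.diag, Matrix.mul_apply, Matrix.single,
      mul_ite, ite_and, Finset.sum_ite_eq]
  have hK : ∀ (g : Fin nx → Fin na → ℂ) (p q : Fin d),
      R g p q = ∑ t : Fin nx × Fin na, g t.1 t.2 * K t.1 t.2 p q := by
    intro g p q
    have hg : g = ∑ x : Fin nx, ∑ a : Fin na,
        g x a • (fun x' a' => if x' = x ∧ a' = a then (1:ℂ) else 0) := by
      funext x' a'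
      simp [Finset.sum_apply, Pi.smul_apply, smul_eq_mul, mul_ite, ite_and,
        Finset.sum_ite_eq]
    conv_lhs => rw [hg]
    simp only [map_sum, _root_.map_smul, Matrix.sum_apply, Matrix.smul_apply, smul_eq_mul,
      Fintype.sum_prod_type, hKdef]
  have step1 : ∀ (i j : Fin N → Fin d) (n : Fin N),
      Ψ (Matrix.single (i n) (j n) (1:ℂ)) (u n) (v n)
        = ∑ t : Fin nx × Fin na, M t.1 t.2 (j n) (i n) * K t.1 t.2 (u n) (v n) := by
    intro i j n
    rw [hΨ, hK]
    simp [htr]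
  have hbeh : ∀ g : Fin N → Fin nx × Fin na,
      BehaviourOf M ρ (fun n => (g n).1) (fun n => (g n).2)
        = ∑ i : Fin N → Fin d, ∑ j : Fin N → Fin d,
            ρ i j * ∏ n, M (g n).1 (g n).2 (j n) (i n) := by
    intro g
    simp [BehaviourOf, Matrix.trace, Matrix.diag, Matrix.mul_apply, tensorOp,
      Finset.mul_sum]
  have lhs_eq : tensorPowMap Ψ ρ u v
      = ∑ g : Fin N → Fin nx × Fin na,
          BehaviourOf M ρ (fun n => (g n).1) (fun n => (g n).2)
            * ∏ n, K (g n).1 (g n).2 (u n) (v n) := by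
    have : tensorPowMap Ψ ρ u v
        = ∑ i : Fin N → Fin d, ∑ j : Fin N → Fin d,
            ρ i j * ∏ n, Ψ (Matrix.single (i n) (j n) (1:ℂ)) (u n) (v n) := by
      simp [tensorPowMap, Matrix.sum_apply, Matrix.smul_apply, tensorOp, smul_eq_mul]
    rw [this]
    have expand : ∀ i j : Fin N → Fin d,
        (∏ n, Ψ (Matrix.single (i n) (j n) (1:ℂ)) (u n) (v n))
          = ∑ g : Fin N → Fin nx × Fin na,
              (∏ n, M (g n).1 (g n).2 (j n) (i n))
                * ∏ n, K (g n).1 (g n).2 (u n) (v n) := by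
      intro i j
      have := Finset.prod_univ_sum (fun _ : Fin N => (Finset.univ : Finset (Fin nx × Fin na)))
        (fun n t => M t.1 t.2 (j n) (i n) * K t.1 t.2 (u n) (v n))
      simp only [Fintype.piFinset_univ] at this
      calc (∏ n, Ψ (Matrix.single (i n) (j n) (1:ℂ)) (u n) (v n))
          = ∏ n, ∑ t : Fin nx × Fin na, M t.1 t.2 (j n) (i n) * K t.1 t.2 (u n) (v n) := by
            exact Finset.prod_congr rfl (fun n _ => step1 i j n)
        _ = ∑ g : Fin N → Fin nx × Fin na,
              ∏ n, M (g n).1 (g n).2 (j n) (i n) * K (g n).1 (g n).2 (u n) (v n) := this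
        _ = _ := by
            exact Finset.sum_congr rfl (fun g _ => Finset.prod_mul_distrib)
    calc (∑ i : Fin N → Fin d, ∑ j : Fin N → Fin d,
            ρ i j * ∏ n, Ψ (Matrix.single (i n) (j n) (1:ℂ)) (u n) (v n))
        = ∑ i : Fin N → Fin d, ∑ j : Fin N → Fin d, ∑ g : Fin N → Fin nx × Fin na,
            (ρ i j * ∏ n, M (g n).1 (g n).2 (j n) (i n))
              * ∏ n, K (g n).1 (g n).2 (u n) (v n) := by
          refine Finset.sum_congr rfl fun i _ => Finset.sum_congr rfl fun j _ => ?_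
          rw [expand i j, Finset.mul_sum]
          exact Finset.sum_congr rfl fun g _ => by ring
      _ = ∑ i : Fin N → Fin d, ∑ g : Fin N → Fin nx × Fin na, ∑ j : Fin N → Fin d,
            (ρ i j * ∏ n, M (g n).1 (g n).2 (j n) (i n))
              * ∏ n, K (g n).1 (g n).2 (u n) (v n) :=
          Finset.sum_congr rfl fun i _ => Finset.sum_comm
      _ = ∑ g : Fin N → Fin nx × Fin na, ∑ i : Fin N → Fin d, ∑ j : Fin N → Fin d,
            (ρ i j * ∏ n, M (g n).1 (g n).2 (j n) (i n))
              * ∏ n, K (g n).1 (g n).2 (u n) (v n) :=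
          Finset.sum_comm
      _ = _ := by
          refine Finset.sum_congr rfl fun g _ => ?_
          rw [hbeh g, Finset.sum_mul]
          exact Finset.sum_congr rfl fun i _ => by rw [Finset.sum_mul]
  have rhs_eq : (∑ l, w l • tensorOp (fun n => R (fun x a => ((c l n x a : ℝ) : ℂ)))) u v
      = ∑ g : Fin N → Fin nx × Fin na,
          (∑ l, (w l : ℂ) * ∏ n, ((c l n (g n).1 (g n).2 : ℝ) : ℂ))
            * ∏ n, K (g n).1 (g n).2 (u n) (v n) := by
    have expand : ∀ l : Fin m,
        (∏ n, R (fun x a => ((c l n x a : ℝ) : ℂ)) (u n) (v n))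
          = ∑ g : Fin N → Fin nx × Fin na,
              (∏ n, ((c l n (g n).1 (g n).2 : ℝ) : ℂ))
                * ∏ n, K (g n).1 (g n).2 (u n) (v n) := by
      intro l
      have := Finset.prod_univ_sum (fun _ : Fin N => (Finset.univ : Finset (Fin nx × Fin na)))
        (fun n t => ((c l n t.1 t.2 : ℝ) : ℂ) * K t.1 t.2 (u n) (v n))
      simp only [Fintype.piFinset_univ] at this
      calc (∏ n, R (fun x a => ((c l n x a : ℝ) : ℂ)) (u n) (v n))
          = ∏ n, ∑ t : Fin nx × Fin na,
              ((c l n t.1 t.2 : ℝ) : ℂ) * K t.1 t.2 (u n) (v n) := by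
            exact Finset.prod_congr rfl (fun n _ => hK _ (u n) (v n))
        _ = ∑ g : Fin N → Fin nx × Fin na,
              ∏ n, ((c l n (g n).1 (g n).2 : ℝ) : ℂ) * K (g n).1 (g n).2 (u n) (v n) := this
        _ = _ := Finset.sum_congr rfl (fun g _ => Finset.prod_mul_distrib)
    calc (∑ l, w l • tensorOp (fun n => R (fun x a => ((c l n x a : ℝ) : ℂ)))) u v
        = ∑ l, (w l : ℂ) * ∏ n, R (fun x a => ((c l n x a : ℝ) : ℂ)) (u n) (v n) := by
          simp [Matrix.sum_apply, Matrix.smul_apply, tensorOp, Complex.real_smul]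
      _ = ∑ l, ∑ g : Fin N → Fin nx × Fin na,
            ((w l : ℂ) * ∏ n, ((c l n (g n).1 (g n).2 : ℝ) : ℂ))
              * ∏ n, K (g n).1 (g n).2 (u n) (v n) := by
          refine Finset.sum_congr rfl fun l _ => ?_
          rw [expand l, Finset.mul_sum]
          exact Finset.sum_congr rfl fun g _ => by ring
      _ = ∑ g : Fin N → Fin nx × Fin na, ∑ l,
            ((w l : ℂ) * ∏ n, ((c l n (g n).1 (g n).2 : ℝ) : ℂ))
              * ∏ n, K (g n).1 (g n).2 (u n) (v n) :=
          Finset.sum_comm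
      _ = _ :=
          Finset.sum_congr rfl fun g _ => (Finset.sum_mul _ _ _).symm
  rw [lhs_eq, rhs_eq]
  refine Finset.sum_congr rfl fun g _ => ?_
  congr 1
  rw [hB]
  push_cast
  rfl
end
end

section
/- The operator Z⊗Z + Z⊗X + X⊗Z − X⊗X, where X and Z are the Pauli matrices on ℂ², has maximal eigenvalue 2√2. -/
open Matrix BigOperators Kronecker ComplexOrder

noncomputable section

def Zm : Op 2 := !![1, 0; 0, -1]
def Xm : Op 2 := !![0, 1; 1, 0]

set_option maxHeartbeats 1000000
def Mop : Matrix (Fin 2 × Fin 2) (Fin 2 × Fin 2) ℂ :=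
  Zm ⊗ₖ Zm + Zm ⊗ₖ Xm + Xm ⊗ₖ Zm - Xm ⊗ₖ Xm

lemma Mop_apply (p q : Fin 2 × Fin 2) :
    Mop p q = Zm p.1 q.1 * Zm p.2 q.2 + Zm p.1 q.1 * Xm p.2 q.2
      + Xm p.1 q.1 * Zm p.2 q.2 - Xm p.1 q.1 * Xm p.2 q.2 := by
  simp [Mop, Matrix.kroneckerMap_apply]

lemma Mop_herm : Mop.IsHermitian := by
  rw [Matrix.IsHermitian]
  ext p q
  rw [Matrix.conjTranspose_apply, Mop_apply, Mop_apply]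
  fin_cases p <;> fin_cases q <;> simp [Zm, Xm]

lemma Mop_cube : Mop * (Mop * Mop) = (8 : ℂ) • Mop := by
  ext p q
  simp only [Matrix.mul_apply, Matrix.smul_apply, Mop_apply, Fintype.sum_prod_type,
    Fin.sum_univ_two]
  fin_cases p <;> fin_cases q <;> simp [Zm, Xm] <;> ring

lemma Mop_trace : Mop.trace = 0 := by
  simp [Matrix.trace, Matrix.diag, Fintype.sum_prod_type, Fin.sum_univ_two, Mop_apply, Zm, Xm]

lemma Mop_ne : Mop ≠ 0 := by
  intro hM
  have : Mop ((0 : Fin 2), (0 : Fin 2)) ((0 : Fin 2), (0 : Fin 2)) = 0 := by rw [hM]; rfl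
  rw [Mop_apply] at this
  simp [Zm, Xm] at this

lemma eig_cube (h : Mop.IsHermitian) (i : Fin 2 × Fin 2) :
    (h.eigenvalues i) ^ 3 = 8 * h.eigenvalues i := by
  set v := ⇑(h.eigenvectorBasis i) with hvdef
  have hv : Mop *ᵥ v = (h.eigenvalues i) • v := h.mulVec_eigenvectorBasis i
  have h3 : Mop *ᵥ (Mop *ᵥ (Mop *ᵥ v)) = (8 : ℂ) • (Mop *ᵥ v) := by
    rw [Matrix.mulVec_mulVec, Matrix.mulVec_mulVec, Matrix.mul_assoc, Mop_cube,
      Matrix.smul_mulVec]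
  rw [hv, Matrix.mulVec_smul, hv, Matrix.mulVec_smul, Matrix.mulVec_smul, hv] at h3
  obtain ⟨j, hj⟩ := Function.ne_iff.mp (fun h0 => h.eigenvectorBasis.orthonormal.ne_zero i (by ext k; simpa using congrFun h0 k))
  have hj' : v j ≠ 0 := by simpa using hj
  have hc := congrFun h3 j
  simp only [Pi.smul_apply, Complex.real_smul, smul_eq_mul, Complex.ofReal_mul] at hc
  have hc' : ((h.eigenvalues i : ℂ)) ^ 3 * v j = (8 * (h.eigenvalues i : ℂ)) * v j := by
    linear_combination hc
  have h4 := mul_right_cancel₀ hj' hc'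
  exact Complex.ofReal_injective (by push_cast; linear_combination h4)

lemma eig_sum (h : Mop.IsHermitian) : ∑ i, h.eigenvalues i = 0 := by
  have hs := h.spectral_theorem
  have hu : star (h.eigenvectorUnitary : Matrix (Fin 2 × Fin 2) (Fin 2 × Fin 2) ℂ)
      * (h.eigenvectorUnitary : Matrix (Fin 2 × Fin 2) (Fin 2 × Fin 2) ℂ) = 1 :=
    Matrix.mem_unitaryGroup_iff'.mp h.eigenvectorUnitary.2
  have ht : Mop.trace = ∑ i, (h.eigenvalues i : ℂ) := by
    conv_lhs => rw [hs]
    rw [Unitary.conjStarAlgAut_apply, Matrix.trace_mul_cycle, hu, Matrix.one_mul, Matrix.trace_diagonal]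
    rfl
  rw [Mop_trace] at ht
  exact_mod_cast ht.symm

theorem key :
    ∃ h : Mop.IsHermitian,
      (∀ i, h.eigenvalues i ≤ 2 * Real.sqrt 2) ∧
      (∃ i, h.eigenvalues i = 2 * Real.sqrt 2) := by
  have h := Mop_herm
  set s : ℝ := 2 * Real.sqrt 2 with hsdef
  have hs0 : 0 ≤ s := by positivity
  have hs2 : s ^ 2 = 8 := by
    rw [hsdef, mul_pow, Real.sq_sqrt (by norm_num : (0:ℝ) ≤ 2)]; norm_num
  have hfac : ∀ i, h.eigenvalues i = s ∨ h.eigenvalues i = 0 ∨ h.eigenvalues i = -s := by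
    intro i
    have hc := eig_cube h i
    have : (h.eigenvalues i - s) * (h.eigenvalues i * (h.eigenvalues i + s)) = 0 := by
      linear_combination hc - h.eigenvalues i * hs2
    rcases mul_eq_zero.mp this with h1 | h2
    · exact Or.inl (by linarith [sub_eq_zero.mp h1])
    · rcases mul_eq_zero.mp h2 with h3 | h4
      · exact Or.inr (Or.inl h3)
      · exact Or.inr (Or.inr (by linarith [add_eq_zero_iff_eq_neg.mp h4]))
  refine ⟨h, fun i => ?_, ?_⟩
  · rcases hfac i with h1 | h2 | h3
    · exact le_of_eq h1
    · rw [h2]; exact hs0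
    · rw [h3]; linarith
  · by_contra hno
    push_neg at hno
    have hle : ∀ i ∈ Finset.univ, h.eigenvalues i ≤ 0 := by
      intro i _
      rcases hfac i with h1 | h2 | h3
      · exact absurd h1 (hno i)
      · simp [h2]
      · rw [h3]; linarith
    have hall : ∀ i ∈ Finset.univ, h.eigenvalues i = 0 :=
      (Finset.sum_eq_zero_iff_of_nonpos hle).mp (eig_sum h)
    have hz : h.eigenvalues = 0 := funext fun i => hall i (Finset.mem_univ i)
    have hM0 : Mop = 0 := by
      rw [h.spectral_theorem, hz]
      ext p q
      simp [Matrix.mul_apply, Matrix.diagonal_apply]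
    exact Mop_ne hM0

/-- the operator `Z⊗Z + Z⊗X + X⊗Z − X⊗X` has maximal eigenvalue `2√2`. -/
theorem stmt_15 :
    ∃ h : (Zm ⊗ₖ Zm + Zm ⊗ₖ Xm + Xm ⊗ₖ Zm - Xm ⊗ₖ Xm).IsHermitian,
      (∀ i, h.eigenvalues i ≤ 2 * Real.sqrt 2) ∧
      (∃ i, h.eigenvalues i = 2 * Real.sqrt 2) :=
  key
end
end

section
/- Let T^{η*}_{a|x} be the η*-noisy trine qubit measurements, decomposed as T^{η*}_{a|x} = p T_{a|x} + (1−p) T^{2/3}_{a|x} where T^{2/3}_{a|x} = (2/3)T_{a|x} + I/6 is jointly measurable and the pair (T_{a|x}, arbitrary measurements) never violates bipartite Bell inequalities when paired with T^{η*}. Then for any three-qubit state ρ_3, any term of the form Tr[ρ_3 (T_{a|x} ⊗ T^{η*}_{b|y} ⊗ T^{2/3}_{c|z})] admits a local hidden variable model: it equals Σ_{μ,λ} p(μ,λ) p^{(1)}(a|x,μ,λ) p^{(2)}(b|y,μ,λ) p^{(3)}(c|z,λ). -/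
open Matrix BigOperators Kronecker ComplexOrder

noncomputable section

/-- Trine qubit measurements `T_{a|x} = ½(I + (−1)^a v_x·σ)`. -/
def Tm : Fin 3 → Fin 2 → Op 2 :=
  fun x a => (1 / 2 : ℂ) •
    ((1 : Op 2) + ((-1 : ℂ) ^ (a : ℕ)) •
      (((Real.cos (2 * Real.pi * (x : ℕ) / 3) : ℂ)) • Xm
        + ((Real.sin (2 * Real.pi * (x : ℕ) / 3) : ℂ)) • Zm)) 

/-- The `2/3`-noisy trine measurements `T^{2/3}_{a|x} = (2/3)T_{a|x} + I/6`. -/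
def T23 : Fin 3 → Fin 2 → Op 2 :=
  fun x a => (2 / 3 : ℂ) • Tm x a + (1 / 6 : ℂ) • (1 : Op 2)

/-- The `η*`-noisy trine measurements, written as `p T + (1−p) T^{2/3}`. -/
def Tstar (p : ℝ) : Fin 3 → Fin 2 → Op 2 :=
  fun x a => p • Tm x a + (1 - p) • T23 x a

-- ===== auxiliary lemmas =====

lemma trace_nonneg_of_psd {n : Type*} [Fintype n] [DecidableEq n] {A : Matrix n n ℂ}
    (hA : A.PosSemidef) : 0 ≤ A.trace := by
  rw [Matrix.trace]
  refine Finset.sum_nonneg fun i _ => ?_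
  have := hA.dotProduct_mulVec_nonneg (Pi.single i 1)
  simpa [Matrix.mulVec_single, dotProduct, Pi.single_apply, Finset.sum_ite_eq'] using this

lemma exists_eq_conjTranspose_mul_self_of_psd {n : Type*} [Fintype n] [DecidableEq n]
    {G : Matrix n n ℂ} (hG : G.PosSemidef) : ∃ B : Matrix n n ℂ, G = Bᴴ * B := by
  open scoped MatrixOrder in
  obtain ⟨X, hX, -, hXX⟩ :=
    CFC.exists_sqrt_of_isSelfAdjoint_of_quasispectrumRestricts hG.isHermitian
      (QuasispectrumRestricts.nnreal_of_nonneg hG.nonneg)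
  refine ⟨X, ?_⟩
  rw [← hXX, ← Matrix.star_eq_conjTranspose, hX.star_eq]

lemma trace_psd_mul_nonneg {n : Type*} [Fintype n] [DecidableEq n] {M G : Matrix n n ℂ}
    (hM : M.PosSemidef) (hG : G.PosSemidef) : 0 ≤ (M * G).trace := by
  obtain ⟨B, rfl⟩ := exists_eq_conjTranspose_mul_self_of_psd hG
  rw [← Matrix.mul_assoc, Matrix.trace_mul_cycle]
  exact trace_nonneg_of_psd (hM.mul_mul_conjTranspose_same B)

lemma psd_zero_of_trace_zero {n : Type*} [Fintype n] [DecidableEq n] {A : Matrix n n ℂ}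
    (hA : A.PosSemidef) (h : A.trace = 0) : A = 0 := by
  obtain ⟨B, rfl⟩ := exists_eq_conjTranspose_mul_self_of_psd hA
  have hB : B = 0 := by
    have htr : (∑ j, ∑ i, ((Complex.normSq (B i j) : ℝ) : ℂ)) = 0 := by
      rw [← h, Matrix.trace]
      refine Finset.sum_congr rfl fun j _ => ?_
      simp [Matrix.mul_apply, Matrix.conjTranspose_apply, Matrix.diag,
        mul_comm, Complex.mul_conj]
    have : (∑ j, ∑ i, Complex.normSq (B i j)) = 0 := by
      exact_mod_cast htr
    ext i j
    have h1 : ∀ j' ∈ Finset.univ, (0:ℝ) ≤ ∑ i, Complex.normSq (B i j') :=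
      fun j' _ => Finset.sum_nonneg fun i _ => Complex.normSq_nonneg _
    have h2 := (Finset.sum_eq_zero_iff_of_nonneg h1).mp this j (Finset.mem_univ j)
    have h3 := (Finset.sum_eq_zero_iff_of_nonneg
      (fun i _ => Complex.normSq_nonneg (B i j))).mp h2 i (Finset.mem_univ i)
    simpa [Complex.normSq_eq_zero] using h3
  simp [hB]

lemma psd_real_smul {n : Type*} [Fintype n] [DecidableEq n] {A : Matrix n n ℂ}
    (hA : A.PosSemidef) {r : ℝ} (hr : 0 ≤ r) : (((r : ℝ) : ℂ) • A).PosSemidef := by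
  refine .of_dotProduct_mulVec_nonneg ?_ ?_
  · show ((↑r : ℂ) • A)ᴴ = (↑r : ℂ) • A
    rw [Matrix.conjTranspose_smul, hA.1]
    norm_num
  · intro y
    rw [Matrix.smul_mulVec, dotProduct_smul, smul_eq_mul]
    refine mul_nonneg ?_ (hA.dotProduct_mulVec_nonneg y)
    rw [Complex.nonneg_iff]
    constructor <;> simp [hr]

def e3 : (Fin 2 × Fin 2 × Fin 2) ≃ (Fin 3 → Fin 2) where
  toFun x := ![x.1, x.2.1, x.2.2]
  invFun v := (v 0, v 1, v 2)
  left_inv := by decide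
  right_inv := by decide

lemma sum_pi3 {M : Type*} [AddCommMonoid M] (f : (Fin 3 → Fin 2) → M) :
    ∑ v, f v = ∑ i, ∑ j, ∑ k, f ![i, j, k] := by
  rw [← Equiv.sum_comp e3 f]
  simp [Fintype.sum_prod_type, e3]

/-- The (unnormalized) conditional state of the first two qubits after measuring `G`
on the third. -/
def condSt (ρ : Matrix (Fin 3 → Fin 2) (Fin 3 → Fin 2) ℂ) (G : Op 2) :
    Matrix (Fin 2 × Fin 2) (Fin 2 × Fin 2) ℂ :=
  Matrix.of fun pq rs => ∑ m, ∑ n, ρ ![pq.1, pq.2, m] ![rs.1, rs.2, n] * G n m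

lemma trace_key (ρ : Matrix (Fin 3 → Fin 2) (Fin 3 → Fin 2) ℂ) (A B G : Op 2) :
    (ρ * tensorOp ![A, B, G]).trace = (condSt ρ G * (A ⊗ₖ B)).trace := by
  simp only [Matrix.trace, Matrix.diag, Matrix.mul_apply, tensorOp, condSt,
    Matrix.of_apply, Fin.prod_univ_three, kroneckerMap_apply,
    Fintype.sum_prod_type, Matrix.cons_val_zero, Matrix.cons_val_one,
    Matrix.head_cons, Matrix.cons_val_two, Matrix.tail_cons]
  rw [sum_pi3]
  simp only [sum_pi3, Matrix.cons_val_zero, Matrix.cons_val_one, Matrix.head_cons,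
    Matrix.cons_val_two, Matrix.tail_cons]
  simp only [Fin.sum_univ_two]
  ring

def Vmat (y : Fin 2 × Fin 2 → ℂ) : Matrix (Fin 3 → Fin 2) (Fin 2) ℂ :=
  Matrix.of fun v n => y (v 0, v 1) * (if v 2 = n then 1 else 0)

lemma cond_quad (ρ : Matrix (Fin 3 → Fin 2) (Fin 3 → Fin 2) ℂ) (G : Op 2)
    (y : Fin 2 × Fin 2 → ℂ) :
    star y ⬝ᵥ (condSt ρ G) *ᵥ y = ((Vmat y)ᴴ * ρ * (Vmat y) * G).trace := by
  simp only [dotProduct, Matrix.mulVec, Matrix.trace, Matrix.diag, Matrix.mul_apply,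
    condSt, Vmat, Matrix.of_apply, Matrix.conjTranspose_apply, Pi.star_apply,
    Fintype.sum_prod_type, Fin.sum_univ_two, star_mul', star_one, star_zero]
  simp only [sum_pi3, Matrix.cons_val_zero, Matrix.cons_val_one, Matrix.head_cons,
    Matrix.cons_val_two, Matrix.tail_cons, Fin.sum_univ_two]
  norm_num
  ring

lemma condSt_psd {ρ : Matrix (Fin 3 → Fin 2) (Fin 3 → Fin 2) ℂ} (hρ : ρ.PosSemidef)
    {G : Op 2} (hG : G.PosSemidef) : (condSt ρ G).PosSemidef := by
  refine .of_dotProduct_mulVec_nonneg ?_ ?_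
  · ext p q
    simp only [Matrix.conjTranspose_apply, condSt, Matrix.of_apply, star_sum, star_mul']
    rw [Finset.sum_comm]
    refine Finset.sum_congr rfl fun n _ => Finset.sum_congr rfl fun m _ => ?_
    rw [hρ.1.apply, hG.1.apply]
  · intro y
    rw [cond_quad]
    rw [show (Vmat y)ᴴ * ρ * (Vmat y) * G = ((Vmat y)ᴴ * ρ * (Vmat y)) * G from rfl]
    exact trace_psd_mul_nonneg (hρ.conjTranspose_mul_mul_same (Vmat y)) hG

lemma tensor3_sum (A B : Op 2) {k : ℕ} (r : Fin k → ℝ) (C : Fin k → Op 2) :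
    tensorOp ![A, B, ∑ l, r l • C l] = ∑ l, (r l : ℂ) • tensorOp ![A, B, C l] := by
  ext v w
  simp only [tensorOp, Matrix.of_apply, Fin.prod_univ_three, Matrix.cons_val_zero,
    Matrix.cons_val_one, Matrix.head_cons, Matrix.cons_val_two, Matrix.tail_cons,
    Matrix.sum_apply, Matrix.smul_apply, Finset.mul_sum, Complex.real_smul,
    smul_eq_mul]
  refine Finset.sum_congr rfl fun l _ => by ring

lemma tensor_one :
    tensorOp ![(1 : Op 2), 1, 1] = (1 : Matrix (Fin 3 → Fin 2) (Fin 3 → Fin 2) ℂ) := by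
  ext v w
  simp only [tensorOp, Matrix.of_apply, Fin.prod_univ_three, Matrix.cons_val_zero,
    Matrix.cons_val_one, Matrix.head_cons, Matrix.cons_val_two, Matrix.tail_cons,
    Matrix.one_apply]
  by_cases h : v = w
  · subst h; simp
  · rw [if_neg h]
    have : v 0 ≠ w 0 ∨ v 1 ≠ w 1 ∨ v 2 ≠ w 2 := by
      by_contra hc
      push_neg at hc
      exact h (funext fun n => by fin_cases n <;> tauto)
    rcases this with h'|h'|h' <;> simp [if_neg h']

lemma pad_sum {m M : ℕ} (h : m ≤ M) (f : Fin m → ℝ) :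
    ∑ μ : Fin M, (if h' : (μ : ℕ) < m then f ⟨μ, h'⟩ else 0) = ∑ ν, f ν := by
  calc ∑ μ : Fin M, (if h' : (μ : ℕ) < m then f ⟨μ, h'⟩ else 0)
      = ∑ i ∈ Finset.range M, (if h' : i < m then f ⟨i, h'⟩ else 0) :=
        by exact Fin.sum_univ_eq_sum_range (fun i => if h' : i < m then f ⟨i, h'⟩ else 0) M
    _ = ∑ i ∈ Finset.range m, (if h' : i < m then f ⟨i, h'⟩ else 0) :=
        (Finset.sum_subset (Finset.range_subset_range.2 h) (fun i _ hi => by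
          rw [dif_neg]
          simpa using hi)).symm
    _ = ∑ ν : Fin m, (if h' : ((ν : ℕ)) < m then f ⟨ν, h'⟩ else 0) :=
        by exact (Fin.sum_univ_eq_sum_range (fun i => if h' : i < m then f ⟨i, h'⟩ else 0) m).symm
    _ = ∑ ν, f ν := Finset.sum_congr rfl fun ν _ => by simp

lemma half_bloch_psd (c s : ℝ) (hcs : c ^ 2 + s ^ 2 = 1) (ε : ℝ) (hε : ε = 1 ∨ ε = -1) :
    ((1 / 2 : ℂ) • ((1 : Op 2) + (ε : ℂ) • (((c : ℂ)) • Xm + ((s : ℂ)) • Zm))).PosSemidef := by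
  refine .of_dotProduct_mulVec_nonneg ?_ ?_
  · ext i j
    fin_cases i <;> fin_cases j <;>
      (simp [Xm, Zm, Matrix.conjTranspose_apply, Matrix.one_apply, Complex.ext_iff]; try ring_nf)
  · intro y
    rw [Complex.nonneg_iff]
    constructor
    · simp only [Xm, Zm, Matrix.mulVec, dotProduct, Fin.sum_univ_two, Matrix.one_apply,
        Matrix.smul_apply, Matrix.add_apply, Pi.star_apply, Complex.add_re, Complex.add_im,
        Complex.mul_re, Complex.mul_im, Matrix.cons_val', Matrix.cons_val_zero,
        Matrix.cons_val_one, Matrix.head_cons, Matrix.head_fin_const, Matrix.empty_val',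
        Matrix.cons_val_fin_one, smul_eq_mul, Complex.ofReal_re, Complex.ofReal_im,
        Complex.one_re, Complex.one_im, RCLike.star_def, Complex.conj_re, Complex.conj_im,
        if_true, eq_self_iff_true]
      norm_num
      rcases hε with rfl | rfl <;>
        nlinarith [hcs, sq_nonneg (c*(y 0).re + (1-s)*(y 1).re), sq_nonneg (c*(y 0).im + (1-s)*(y 1).im),
          sq_nonneg ((1+s)*(y 0).re + c*(y 1).re), sq_nonneg ((1+s)*(y 0).im + c*(y 1).im),
          sq_nonneg (c*(y 0).re - (1+s)*(y 1).re), sq_nonneg (c*(y 0).im - (1+s)*(y 1).im),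
          sq_nonneg ((1-s)*(y 0).re - c*(y 1).re), sq_nonneg ((1-s)*(y 0).im - c*(y 1).im),
          sq_nonneg ((y 0).re), sq_nonneg ((y 0).im), sq_nonneg ((y 1).re), sq_nonneg ((y 1).im)]
    · simp [Xm, Zm, Matrix.mulVec, dotProduct, Fin.sum_univ_two, Matrix.one_apply,
        Complex.add_re, Complex.add_im, Complex.mul_re, Complex.mul_im]
      ring

lemma Tm_povm : IsPOVMSet Tm := by
  intro x
  constructor
  · intro a
    have h := half_bloch_psd (Real.cos (2 * Real.pi * (x : ℕ) / 3))
      (Real.sin (2 * Real.pi * (x : ℕ) / 3))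
      (by rw [Real.cos_sq_add_sin_sq]) ((-1 : ℝ) ^ (a : ℕ))
      (by rcases Nat.even_or_odd (a : ℕ) with h | h
          · left; exact h.neg_one_pow
          · right; exact h.neg_one_pow)
    have hcast : ((((-1 : ℝ) ^ (a : ℕ) : ℝ)) : ℂ) = (-1 : ℂ) ^ (a : ℕ) := by push_cast; ring
    rw [hcast] at h
    exact h
  · rw [Fin.sum_univ_two]
    ext i j
    simp [Tm, Matrix.add_apply, Matrix.smul_apply, Matrix.one_apply, smul_eq_mul]
    ring_nf
    split <;> norm_num

-- ===== end auxiliary lemmas =====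

/-- assuming `T^{2/3}` is jointly measurable and `T^{η*}` never violates any
bipartite Bell inequality no matter what the other party measures, every term
`Tr[ρ₃ (T_{a|x} ⊗ T^{η*}_{b|y} ⊗ T^{2/3}_{c|z})]` admits a local hidden variable model. -/
theorem stmt_19 (p : ℝ) (hp0 : 0 ≤ p) (hp1 : p ≤ 1)
    (hJM : JointlyMeasurable T23)
    (hbip : ∀ (nx' na' : ℕ) (Nm : Fin nx' → Fin na' → Op 2), IsPOVMSet Nm →
      ∀ σ : Matrix (Fin 2 × Fin 2) (Fin 2 × Fin 2) ℂ, IsDensity σ →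
        ∃ (m : ℕ) (q : Fin m → ℝ) (c1 : Fin m → Fin nx' → Fin na' → ℝ)
          (c2 : Fin m → Fin 3 → Fin 2 → ℝ),
          (∀ l, 0 ≤ q l) ∧ (∑ l, q l = 1) ∧
          (∀ l, IsCondProb (c1 l)) ∧ (∀ l, IsCondProb (c2 l)) ∧
          ∀ x y a b, (σ * (Nm x a ⊗ₖ Tstar p y b)).trace
            = ((∑ l, q l * c1 l x a * c2 l y b : ℝ) : ℂ))
    (ρ3 : Matrix (Fin 3 → Fin 2) (Fin 3 → Fin 2) ℂ) (hρ : IsDensity ρ3) :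
    ∃ (mμ ml : ℕ) (w : Fin mμ → Fin ml → ℝ)
      (p1 p2 : Fin mμ → Fin ml → Fin 3 → Fin 2 → ℝ) (p3 : Fin ml → Fin 3 → Fin 2 → ℝ),
      (∀ μ l, 0 ≤ w μ l) ∧ (∑ μ, ∑ l, w μ l = 1) ∧
      (∀ μ l, IsCondProb (p1 μ l)) ∧ (∀ μ l, IsCondProb (p2 μ l)) ∧
      (∀ l, IsCondProb (p3 l)) ∧
      ∀ (x y z : Fin 3) (a b c : Fin 2),
        (ρ3 * tensorOp ![Tm x a, Tstar p y b, T23 z c]).trace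
          = ((∑ μ, ∑ l, w μ l * p1 μ l x a * p2 μ l y b * p3 l z c : ℝ) : ℂ) := by
  classical
  obtain ⟨ml, G, p3', hGpovm, hp3cp, hT23⟩ := hJM
  -- nonnegative weights from measuring G on the third qubit
  set tR : Fin ml → ℝ := fun l => ((condSt ρ3 (G l)).trace).re with htRdef
  have hpsd : ∀ l, (condSt ρ3 (G l)).PosSemidef := fun l => condSt_psd hρ.1 (hGpovm.1 l)
  have htrace_nn : ∀ l, 0 ≤ (condSt ρ3 (G l)).trace := fun l => trace_nonneg_of_psd (hpsd l)
  have htR_nn : ∀ l, 0 ≤ tR l := fun l => (Complex.nonneg_iff.mp (htrace_nn l)).1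
  have htC : ∀ l, ((tR l : ℝ) : ℂ) = (condSt ρ3 (G l)).trace := by
    intro l
    have him := (Complex.nonneg_iff.mp (htrace_nn l)).2
    apply Complex.ext <;> simp [htRdef, ← him]
  have hsum_t : ∑ l, (condSt ρ3 (G l)).trace = 1 := by
    have hten : tensorOp ![(1 : Op 2), 1, ∑ l, G l] = ∑ l, tensorOp ![(1 : Op 2), 1, G l] := by
      have h2 := tensor3_sum (1 : Op 2) 1 (fun _ => (1 : ℝ)) G
      simpa using h2
    calc ∑ l, (condSt ρ3 (G l)).trace
        = ∑ l, (ρ3 * tensorOp ![(1 : Op 2), 1, G l]).trace := by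
          refine Finset.sum_congr rfl fun l _ => ?_
          rw [trace_key, Matrix.one_kronecker_one, Matrix.mul_one]
      _ = (ρ3 * tensorOp ![(1 : Op 2), 1, ∑ l, G l]).trace := by
          rw [hten, Matrix.mul_sum, Matrix.trace_sum]
      _ = ρ3.trace := by rw [hGpovm.2, tensor_one, Matrix.mul_one]
      _ = 1 := hρ.2
  have htR1 : ∑ l, tR l = 1 := by
    have h1 : ((∑ l, tR l : ℝ) : ℂ) = 1 := by
      rw [Complex.ofReal_sum]
      rw [Finset.sum_congr rfl fun l _ => htC l]
      exact hsum_t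
    exact_mod_cast h1
  -- for every λ, a local model for the (Tm, Tstar) correlations on the conditional state
  have hmain : ∀ l, ∃ (m : ℕ) (q : Fin m → ℝ) (c1 c2 : Fin m → Fin 3 → Fin 2 → ℝ),
      (∀ μ, 0 ≤ q μ) ∧ (∑ μ, q μ = 1) ∧ (∀ μ, IsCondProb (c1 μ)) ∧ (∀ μ, IsCondProb (c2 μ)) ∧
      ∀ (x y : Fin 3) (a b : Fin 2),
        (ρ3 * tensorOp ![Tm x a, Tstar p y b, G l]).trace
          = ((tR l * ∑ μ, q μ * c1 μ x a * c2 μ y b : ℝ) : ℂ) := by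
    intro l
    by_cases hl : tR l = 0
    · refine ⟨1, fun _ => 1, fun _ _ _ => 1/2, fun _ _ _ => 1/2,
        fun _ => zero_le_one, by simp, ?_, ?_, ?_⟩
      · exact fun _ => ⟨fun _ _ => by norm_num, fun _ => by rw [Fin.sum_univ_two]; norm_num⟩
      · exact fun _ => ⟨fun _ _ => by norm_num, fun _ => by rw [Fin.sum_univ_two]; norm_num⟩
      · intro x y a b
        have hzero : condSt ρ3 (G l) = 0 := by
          apply psd_zero_of_trace_zero (hpsd l)
          rw [← htC l, hl]
          simp
        rw [trace_key, hzero, hl]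
        simp
    · have hlpos : 0 < tR l := lt_of_le_of_ne (htR_nn l) (Ne.symm hl)
      set σl : Matrix (Fin 2 × Fin 2) (Fin 2 × Fin 2) ℂ :=
        (((tR l)⁻¹ : ℝ) : ℂ) • condSt ρ3 (G l) with hσdef
      have hσpsd : σl.PosSemidef := psd_real_smul (hpsd l) (inv_nonneg.mpr (htR_nn l))
      have hσtr : σl.trace = 1 := by
        rw [hσdef, Matrix.trace_smul, smul_eq_mul, ← htC l, ← Complex.ofReal_mul,
          inv_mul_cancel₀ hl]
        simp
      obtain ⟨m, q, c1, c2, hq0, hq1, hc1, hc2, htr⟩ := hbip 3 2 Tm Tm_povm σl ⟨hσpsd, hσtr⟩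
      refine ⟨m, q, c1, c2, hq0, hq1, hc1, hc2, ?_⟩
      intro x y a b
      have hcond : condSt ρ3 (G l) = ((tR l : ℝ) : ℂ) • σl := by
        rw [hσdef, smul_smul, ← Complex.ofReal_mul, mul_inv_cancel₀ hl]
        simp
      rw [trace_key, hcond, Matrix.smul_mul, Matrix.trace_smul, smul_eq_mul, htr x y a b,
        ← Complex.ofReal_mul]
  choose m q c1 c2 hq0 hq1 hc1 hc2 htr using hmain
  set mμ : ℕ := Finset.univ.sup m with hmμdef
  have hle : ∀ l, m l ≤ mμ := fun l => Finset.le_sup (Finset.mem_univ l)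
  -- padded data
  set q' : Fin ml → Fin mμ → ℝ :=
    fun l μ => if h : (μ : ℕ) < m l then q l ⟨μ, h⟩ else 0 with hq'def
  set c1' : Fin mμ → Fin ml → Fin 3 → Fin 2 → ℝ :=
    fun μ l x a => if h : (μ : ℕ) < m l then c1 l ⟨μ, h⟩ x a else 1/2 with hc1'def
  set c2' : Fin mμ → Fin ml → Fin 3 → Fin 2 → ℝ :=
    fun μ l y b => if h : (μ : ℕ) < m l then c2 l ⟨μ, h⟩ y b else 1/2 with hc2'def
  have hq'sum : ∀ l, ∑ μ, q' l μ = 1 := fun l => by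
    rw [hq'def]; rw [pad_sum (hle l) (q l)]; exact hq1 l
  refine ⟨mμ, ml, fun μ l => tR l * q' l μ, c1', c2', fun l z c => p3' l z c,
    ?_, ?_, ?_, ?_, ?_, ?_⟩
  · intro μ l
    refine mul_nonneg (htR_nn l) ?_
    rw [hq'def]
    dsimp only
    split
    · exact hq0 l _
    · exact le_refl 0
  · rw [Finset.sum_comm]
    calc ∑ l, ∑ μ, tR l * q' l μ = ∑ l, tR l * ∑ μ, q' l μ := by
          refine Finset.sum_congr rfl fun l _ => ?_
          rw [Finset.mul_sum]
      _ = ∑ l, tR l := by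
          refine Finset.sum_congr rfl fun l _ => ?_
          rw [hq'sum l, mul_one]
      _ = 1 := htR1
  · intro μ l
    constructor
    · intro x a
      rw [hc1'def]
      dsimp only
      split
      · exact (hc1 l _).1 x a
      · norm_num
    · intro x
      rw [hc1'def]
      dsimp only
      split
      · exact (hc1 l _).2 x
      · rw [Fin.sum_univ_two]; norm_num
  · intro μ l
    constructor
    · intro y b
      rw [hc2'def]
      dsimp only
      split
      · exact (hc2 l _).1 y b
      · norm_num
    · intro y
      rw [hc2'def]
      dsimp only
      split
      · exact (hc2 l _).2 y
      · rw [Fin.sum_univ_two]; norm_num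
  · intro l
    exact hp3cp l
  · intro x y z a b c
    have hkey : ∀ l, ∑ μ : Fin mμ, tR l * q' l μ * c1' μ l x a * c2' μ l y b * p3' l z c
        = p3' l z c * (tR l * ∑ ν, q l ν * c1 l ν x a * c2 l ν y b) := by
      intro l
      have hterm : ∀ μ : Fin mμ, tR l * q' l μ * c1' μ l x a * c2' μ l y b * p3' l z c
          = (if h : (μ : ℕ) < m l then
              (fun ν => p3' l z c * tR l * (q l ν * c1 l ν x a * c2 l ν y b)) ⟨μ, h⟩
            else 0) := by
        intro μ
        by_cases h : (μ : ℕ) < m l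
        · rw [dif_pos h, hq'def, hc1'def, hc2'def]
          dsimp only
          rw [dif_pos h, dif_pos h, dif_pos h]
          ring
        · rw [dif_neg h, hq'def]
          dsimp only
          rw [dif_neg h]
          ring
      rw [Finset.sum_congr rfl fun μ _ => hterm μ,
        pad_sum (hle l) (fun ν => p3' l z c * tR l * (q l ν * c1 l ν x a * c2 l ν y b)),
        ← Finset.mul_sum]
      ring
    calc (ρ3 * tensorOp ![Tm x a, Tstar p y b, T23 z c]).trace
        = ∑ l, ((p3' l z c : ℝ) : ℂ) * (ρ3 * tensorOp ![Tm x a, Tstar p y b, G l]).trace := by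
          rw [hT23 z c, tensor3_sum (Tm x a) (Tstar p y b) (fun l => p3' l z c) G,
            Matrix.mul_sum, Matrix.trace_sum]
          refine Finset.sum_congr rfl fun l _ => ?_
          rw [Matrix.mul_smul, Matrix.trace_smul, smul_eq_mul]
      _ = ∑ l, ((p3' l z c * (tR l * ∑ ν, q l ν * c1 l ν x a * c2 l ν y b) : ℝ) : ℂ) := by
          refine Finset.sum_congr rfl fun l _ => ?_
          rw [htr l x y a b, ← Complex.ofReal_mul]
      _ = ((∑ l, p3' l z c * (tR l * ∑ ν, q l ν * c1 l ν x a * c2 l ν y b) : ℝ) : ℂ) :=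
          (Complex.ofReal_sum _ _).symm
      _ = ((∑ μ, ∑ l, tR l * q' l μ * c1' μ l x a * c2' μ l y b * p3' l z c : ℝ) : ℂ) := by
          congr 1
          rw [Finset.sum_comm]
          exact Finset.sum_congr rfl fun l _ => (hkey l).symm
end
end
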